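/- Let K_{m,n} be the complete bipartite ∂-graph whose partite sets are m boundary vertices and n interior vertices, with the standard Laplacian L_std (all edge weights 1, d = 0) over ℤ. Then Υ_ℤ(K_{m,n}, L_std) ≅ ℤ^m ⊕ (ℤ/m)^{n−1}. -/

import Mathlib

open Finsupp

/-- A graph with boundary (`∂`-graph) together with a generalized Laplacian datum over `R`:
oriented edges with a fixed-point-free reversal involution, local finiteness,
a set of boundary vertices, symmetric edge weights `w` and diagonal perturbation `d`. -/
structure DNetwork (R : Type) [CommRing R] where
  V : Type
  E : Type
  src : E → V
  rev : E → E
  rev_rev : ∀ e, rev (rev e) = e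
  rev_ne : ∀ e, rev e ≠ e
  finE : ∀ x : V, Fintype {e : E // src e = x}
  boundary : Set V
  w : E → R
  w_rev : ∀ e, w (rev e) = w e
  d : V → R

namespace DNetwork

variable {R : Type} [CommRing R] (N : DNetwork R)

/-- The endpoint of an oriented edge. -/
def tgt (e : N.E) : N.V := N.src (N.rev e)

/-- The generalized Laplacian evaluated at the vertex `x`, as a linear functional on
`M`-valued functions: `Lu(x) = d(x) u(x) + ∑_{e : e₊ = x} w(e) (u(x) - u(e₋))`. -/
noncomputable def lapAt {M : Type} [AddCommGroup M] [Module R M] (x : N.V) :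
    (N.V → M) →ₗ[R] M :=
  letI := N.finE x
  N.d x • (LinearMap.proj x : (N.V → M) →ₗ[R] M) +
    ∑ e : {e : N.E // N.src e = x},
      N.w e.1 • ((LinearMap.proj x : (N.V → M) →ₗ[R] M) - LinearMap.proj (N.tgt e.1))

/-- The generalized Laplacian applied to the basis chain at the vertex `x`. -/
noncomputable def lapSingle (x : N.V) : N.V →₀ R :=
  letI := N.finE x
  N.d x • Finsupp.single x 1 +
    ∑ e : {e : N.E // N.src e = x},
      N.w e.1 • (Finsupp.single x 1 - Finsupp.single (N.tgt e.1) 1)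

/-- The generalized Laplacian as a linear endomorphism of the module `RV` of `0`-chains. -/
noncomputable def chainLap : (N.V →₀ R) →ₗ[R] (N.V →₀ R) :=
  Finsupp.lsum R fun x => LinearMap.toSpanSingleton R _ (N.lapSingle x)

/-- The set of interior vertices. -/
def interior : Set N.V := N.boundaryᶜ

/-- The submodule `L(RV°)` of `RV`. -/
noncomputable def lapImage : Submodule R (N.V →₀ R) :=
  Submodule.map N.chainLap (Finsupp.supported R R N.interior)

/-- The fundamental module `Υ(G,L) = RV / L(RV°)`. -/
abbrev Upsilon := (N.V →₀ R) ⧸ N.lapImage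

/-- The submodule of `M`-valued harmonic functions `U(G,L,M)`. -/
noncomputable def harmonic (M : Type) [AddCommGroup M] [Module R M] :
    Submodule R (N.V → M) :=
  ⨅ x ∈ N.interior, LinearMap.ker (N.lapAt (M := M) x)

/-- The module `U₀(G,L,M)` of finitely supported `M`-valued functions `u` with
`u = 0` on the boundary and `Lu ≡ 0` everywhere. -/
noncomputable def U0 (M : Type) [AddCommGroup M] [Module R M] :
    Submodule R (N.V →₀ M) :=
  (⨅ x ∈ N.boundary, LinearMap.ker (Finsupp.lapply (M := M) (R := R) x)) ⊓
    (⨅ x : N.V, LinearMap.ker ((N.lapAt (M := M) x).comp Finsupp.lcoeFun))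

/-- Adjacency via an oriented edge. -/
def Adj (x y : N.V) : Prop := ∃ e : N.E, N.src e = x ∧ N.tgt e = y

/-- Connectivity of the underlying graph. -/
def Connected : Prop := ∀ x y : N.V, Relation.ReflTransGen N.Adj x y

end DNetwork

/-- The complete boundary-interior bipartite `∂`-graph `K_{m,n}` with `m` boundary vertices,
`n` interior vertices, every boundary vertex joined to every interior vertex by a single edge,
all edge weights `1` and `d = 0` (the standard Laplacian) over `ℤ`. -/
noncomputable def bipNet (m n : ℕ) : DNetwork ℤ where
  V := Fin m ⊕ Fin n
  E := (Fin m × Fin n) ⊕ (Fin n × Fin m)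
  src := fun e => match e with
    | .inl p => .inl p.1
    | .inr p => .inr p.1
  rev := fun e => match e with
    | .inl p => .inr (p.2, p.1)
    | .inr p => .inl (p.2, p.1)
  rev_rev := by rintro (⟨i, j⟩ | ⟨j, i⟩) <;> rfl
  rev_ne := by rintro (⟨i, j⟩ | ⟨j, i⟩) <;> simp
  finE := fun _ => Fintype.ofFinite _
  boundary := Set.range Sum.inl
  w := fun _ => 1
  w_rev := fun _ => rfl
  d := fun _ => 0

section BipAux

open Finsupp

variable (m n : ℕ)

/-- The Laplacian generator attached to the interior vertex `j` of `K_{m,n}`. -/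
noncomputable def bipGen (j : Fin n) : (Fin m ⊕ Fin n) →₀ ℤ :=
  (m : ℤ) • Finsupp.single (Sum.inr j) 1 - ∑ i : Fin m, Finsupp.single (Sum.inl i) 1

lemma bipNet_chainLap_single (x : Fin m ⊕ Fin n) :
    (bipNet m n).chainLap (Finsupp.single x 1) = (bipNet m n).lapSingle x := by
  simp [DNetwork.chainLap]
  exact (Finsupp.sum_single_index (by simp)).trans (by simp)

lemma bipNet_lapSingle (j : Fin n) :
    (bipNet m n).lapSingle (Sum.inr j) = bipGen m n j := by
  letI := (bipNet m n).finE (Sum.inr j)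
  have hb : Function.Bijective (fun i : Fin m =>
      (⟨Sum.inr (j, i), rfl⟩ : {e : (bipNet m n).E // (bipNet m n).src e = Sum.inr j})) := by
    constructor
    · intro a b h
      have h2 : (Sum.inr (j, a) : (Fin m × Fin n) ⊕ (Fin n × Fin m)) = Sum.inr (j, b) :=
        congrArg Subtype.val h
      exact congrArg Prod.snd (Sum.inr_injective h2)
    · rintro ⟨(⟨i, j'⟩ | ⟨j', i⟩), h⟩
      · exact absurd h (by simp [bipNet])
      · obtain rfl : j' = j := by simpa [bipNet] using h
        exact ⟨i, rfl⟩
  have hsum := Fintype.sum_bijective _ hb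
    (fun i : Fin m => (Finsupp.single (Sum.inr j) 1 : (bipNet m n).V →₀ ℤ)
      - (Finsupp.single (Sum.inl i) 1 : (bipNet m n).V →₀ ℤ))
    (fun e : {e : (bipNet m n).E // (bipNet m n).src e = Sum.inr j} =>
      (bipNet m n).w e.1 • ((Finsupp.single (Sum.inr j) 1 : (bipNet m n).V →₀ ℤ)
      - Finsupp.single ((bipNet m n).tgt e.1) 1))
    (fun i => by simp [bipNet, DNetwork.tgt]; exact (one_smul ℤ _).symm)
  unfold DNetwork.lapSingle
  rw [show (bipNet m n).d (Sum.inr j) = 0 from rfl, zero_smul, zero_add, ← hsum]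
  simp [bipGen, Finset.sum_sub_distrib, sub_left_inj]
  exact congrArg (· - _) ((Nat.cast_smul_eq_nsmul ℤ m _).symm.trans (Finsupp.smul_single_one _ _))

lemma bipNet_lapImage :
    (bipNet m n).lapImage = Submodule.span ℤ (Set.range (bipGen m n)) := by
  have h1 : (bipNet m n).interior = Set.range Sum.inr := Set.compl_range_inl
  rw [DNetwork.lapImage, Finsupp.supported_eq_span_single, Submodule.map_span, h1]
  congr 1
  show ⇑(bipNet m n).chainLap '' ((fun i : (bipNet m n).V => Finsupp.single i (1:ℤ)) '' Set.range (Sum.inr : Fin n → (bipNet m n).V)) = _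
  rw [Set.image_image]
  refine (Set.range_comp _ (Sum.inr : Fin n → (bipNet m n).V)).symm.trans ?_
  have h2 : ((fun x => (bipNet m n).chainLap (Finsupp.single x 1)) ∘ Sum.inr) = bipGen m n := by
    funext j
    exact (bipNet_chainLap_single m n (Sum.inr j)).trans (bipNet_lapSingle m n j)
  exact congrArg Set.range h2

/-- Images of the basis vectors under the quotient-describing map. -/
noncomputable def bipT [NeZero m] : (Fin m ⊕ Fin n) → (Fin m → ℤ) × (Fin (n - 1) → ZMod m)
  | Sum.inl i => (if i = 0 then ((m : ℤ) + 1) • Pi.single (0 : Fin m) 1 - 1 else Pi.single i 1, 0)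
  | Sum.inr j => (Pi.single 0 1, fun s => if (s : ℕ) + 1 = (j : ℕ) then 1 else 0)

noncomputable def bipPhi [NeZero m] :
    ((Fin m ⊕ Fin n) →₀ ℤ) →ₗ[ℤ] (Fin m → ℤ) × (Fin (n - 1) → ZMod m) :=
  Finsupp.lsum ℤ fun x => LinearMap.toSpanSingleton ℤ _ (bipT m n x)

lemma bipPhi_single [NeZero m] (x : Fin m ⊕ Fin n) (c : ℤ) :
    bipPhi m n (Finsupp.single x c) = c • bipT m n x := by
  simp [bipPhi]

lemma sum_bipT_inl_fst [NeZero m] :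
    ∑ i : Fin m, (bipT m n (Sum.inl i)).1 = (m : ℤ) • Pi.single (0 : Fin m) 1 := by
  rw [← Finset.add_sum_erase Finset.univ (fun i : Fin m => (bipT m n (Sum.inl i)).1)
    (Finset.mem_univ 0)]
  have h0 : (bipT m n (Sum.inl (0 : Fin m))).1 = ((m : ℤ) + 1) • Pi.single (0 : Fin m) 1 - 1 := by
    simp [bipT]
  have h1 : ∑ i ∈ Finset.univ.erase (0 : Fin m), (bipT m n (Sum.inl i)).1
      = (1 : Fin m → ℤ) - Pi.single 0 1 := by
    have hc : ∀ i ∈ Finset.univ.erase (0 : Fin m),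
        (bipT m n (Sum.inl i)).1 = Pi.single i 1 := by
      intro i hi
      simp [bipT, (Finset.mem_erase.1 hi).1]
    rw [Finset.sum_congr rfl hc, Finset.sum_erase_eq_sub (Finset.mem_univ 0)]
    congr 1
    exact Finset.univ_sum_single (fun _ : Fin m => (1 : ℤ))
  rw [h0, h1]
  module

lemma bipPhi_gen' (m n : ℕ) [NeZero m] (j : Fin n) : bipPhi m n (bipGen m n j) = 0 := by
  have heq : bipPhi m n (bipGen m n j)
      = (m : ℤ) • bipT m n (Sum.inr j) - ∑ i : Fin m, bipT m n (Sum.inl i) := by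
    simp [bipGen, bipPhi_single]
  rw [heq, Prod.ext_iff]
  constructor
  · show (m : ℤ) • (bipT m n (Sum.inr j)).1 - (∑ i : Fin m, bipT m n (Sum.inl i)).1 = 0
    rw [Prod.fst_sum, sum_bipT_inl_fst]
    simp [bipT]
  · show (m : ℤ) • (bipT m n (Sum.inr j)).2 - (∑ i : Fin m, bipT m n (Sum.inl i)).2 = 0
    rw [Prod.snd_sum]
    have : ∑ i : Fin m, (bipT m n (Sum.inl i)).2 = 0 := by simp [bipT]
    rw [this, sub_zero]
    funext s
    show (m : ℤ) • (bipT m n (Sum.inr j)).2 s = 0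
    rw [zsmul_eq_mul]
    push_cast
    simp [ZMod.natCast_self]

lemma bipPhi_gen [NeZero m] (j : Fin n) : bipPhi m n (bipGen m n j) = 0 :=
  bipPhi_gen' m n j

lemma bipPhi_surjective' (m n : ℕ) [NeZero m] [NeZero n] :
    Function.Surjective (bipPhi m n) := by
  rintro ⟨a, b⟩
  set p : Fin m → ((Fin m ⊕ Fin n) →₀ ℤ) := fun k =>
    if k = 0 then Finsupp.single (Sum.inr (0 : Fin n)) 1 else Finsupp.single (Sum.inl k) 1 with hp_def
  set q : Fin (n - 1) → ((Fin m ⊕ Fin n) →₀ ℤ) := fun s =>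
    Finsupp.single (Sum.inr (⟨(s : ℕ) + 1, by omega⟩ : Fin n)) 1
      - Finsupp.single (Sum.inr (0 : Fin n)) 1 with hq_def
  have hp : ∀ k, bipPhi m n (p k) = (Pi.single k 1, 0) := by
    intro k
    by_cases hk : k = 0
    · subst hk
      simp only [hp_def, if_pos rfl, bipPhi_single, one_smul, bipT]
      refine Prod.ext rfl ?_
      funext s
      simp
    · simp [hp_def, bipPhi_single, bipT, hk]
  have hq : ∀ s, bipPhi m n (q s) = (0, Pi.single s 1) := by
    intro s
    simp only [hq_def, map_sub, bipPhi_single, one_smul, bipT]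
    refine Prod.ext (by simp) ?_
    funext t
    simp only [Prod.snd_sub, Pi.sub_apply, Fin.val_zero, Pi.single_apply]
    by_cases hts : t = s
    · subst hts
      simp
    · have hc : ¬((t : ℕ) + 1 = (s : ℕ) + 1) := fun h => hts (Fin.ext (Nat.succ_injective h))
      rw [if_neg hc, if_neg hts]; simp
  refine ⟨(∑ k, a k • p k) + (∑ s, ((b s).val : ℤ) • q s), ?_⟩
  rw [map_add, map_sum, map_sum]
  simp only [map_smul, hp, hq]
  refine Prod.ext ?_ ?_
  · show (∑ k, a k • ((Pi.single k 1 : Fin m → ℤ), (0 : Fin (n-1) → ZMod m))).1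
      + (∑ s, ((b s).val : ℤ) • ((0 : Fin m → ℤ), (Pi.single s 1 : Fin (n-1) → ZMod m))).1 = a
    rw [Prod.fst_sum, Prod.fst_sum]
    simp only [Prod.smul_fst, smul_zero, Finset.sum_const_zero, add_zero]
    funext x
    rw [Finset.sum_apply]
    simp [Pi.single_apply, smul_ite, Finset.sum_ite_eq]
  · show (∑ k, a k • ((Pi.single k 1 : Fin m → ℤ), (0 : Fin (n-1) → ZMod m))).2
      + (∑ s, ((b s).val : ℤ) • ((0 : Fin m → ℤ), (Pi.single s 1 : Fin (n-1) → ZMod m))).2 = b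
    rw [Prod.snd_sum, Prod.snd_sum]
    simp only [Prod.smul_snd, smul_zero, Finset.sum_const_zero, zero_add]
    funext x
    rw [Finset.sum_apply]
    simp only [Pi.smul_apply, Pi.single_apply, smul_ite, smul_zero, Finset.sum_ite_eq,
      Finset.mem_univ, if_true]
    rw [zsmul_eq_mul, mul_one, Int.cast_natCast, ZMod.natCast_val, ZMod.cast_id]

lemma bipPhi_surjective [NeZero m] [NeZero n] : Function.Surjective (bipPhi m n) :=
  bipPhi_surjective' m n

lemma bipPhi_ker_le' (m n : ℕ) [NeZero m] [NeZero n] :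
    LinearMap.ker (bipPhi m n) ≤ Submodule.span ℤ (Set.range (bipGen m n)) := by
  intro x hx
  rw [LinearMap.mem_ker] at hx
  set a : Fin m → ℤ := fun i => x (Sum.inl i) with ha_def
  set b : Fin n → ℤ := fun j => x (Sum.inr j) with hb_def
  have hxsum : bipPhi m n x = (∑ i : Fin m, a i • bipT m n (Sum.inl i))
      + (∑ j : Fin n, b j • bipT m n (Sum.inr j)) := by
    rw [bipPhi, Finsupp.lsum_apply]
    rw [Finsupp.sum_fintype _ _ (fun y => by simp)]
    exact Fintype.sum_sum_type _
  have hx0 : (∑ i : Fin m, a i • bipT m n (Sum.inl i))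
      + (∑ j : Fin n, b j • bipT m n (Sum.inr j)) = 0 := by rw [← hxsum]; exact hx
  -- first-coordinate equations
  have hE : ∀ k : Fin m, (∑ i : Fin m, a i • (bipT m n (Sum.inl i)).1 k)
      + (∑ j : Fin n, b j • (bipT m n (Sum.inr j)).1 k) = 0 := by
    intro k
    have h1 := congrArg Prod.fst hx0
    have h2 := congrFun h1 k
    simpa [Prod.fst_sum, Finset.sum_apply] using h2
  have hsplit : ∀ k : Fin m, (∑ i : Fin m, a i • (bipT m n (Sum.inl i)).1 k)
      = a 0 * (((m : ℤ) + 1) * (if k = 0 then 1 else 0) - 1)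
        + (if k = 0 then 0 else a k) := by
    intro k
    rw [← Finset.add_sum_erase _ _ (Finset.mem_univ (0 : Fin m))]
    congr 1
    · simp [bipT, Pi.single_apply, smul_eq_mul]
    · have hterm : ∀ i ∈ Finset.univ.erase (0 : Fin m),
          a i • (bipT m n (Sum.inl i)).1 k = if k = i then a i else 0 := by
        intro i hi
        have hi0 := (Finset.mem_erase.1 hi).1
        simp [bipT, hi0, Pi.single_apply, smul_ite, smul_eq_mul]
      rw [Finset.sum_congr rfl hterm, Finset.sum_ite_eq]
      by_cases hk : k = 0 <;> simp [hk, Finset.mem_erase]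
  have hsplit2 : ∀ k : Fin m, (∑ j : Fin n, b j • (bipT m n (Sum.inr j)).1 k)
      = (∑ j : Fin n, b j) * (if k = 0 then 1 else 0) := by
    intro k
    rw [Finset.sum_mul]
    exact Finset.sum_congr rfl fun j _ => by simp [bipT, Pi.single_apply, smul_eq_mul]
  have h0 : (m : ℤ) * a 0 + (∑ j : Fin n, b j) = 0 := by
    have h := hE 0
    rw [hsplit 0, hsplit2 0] at h
    simp at h
    linarith
  have hak : ∀ k, a k = a 0 := by
    intro k
    by_cases hk : k = 0
    · rw [hk]
    · have h := hE k
      rw [hsplit k, hsplit2 k] at h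
      simp [hk] at h
      linarith
  -- second-coordinate equations: divisibility
  have hE2 : ∀ s : Fin (n - 1),
      (∑ j : Fin n, b j • (bipT m n (Sum.inr j)).2 s) = 0 := by
    intro s
    have h1 := congrArg Prod.snd hx0
    have h2 := congrFun h1 s
    have hz : ∀ i : Fin m, ((a i : ℤ) : ZMod m) * (bipT m n (Sum.inl i)).2 s = 0 := by
      intro i; simp [bipT]
    simpa [Prod.snd_sum, Finset.sum_apply, hz] using h2
  have hdvd' : ∀ j0 : Fin n, j0 ≠ 0 → (m : ℤ) ∣ b j0 := by
    intro j0 hj0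
    have hval : (j0 : ℕ) ≠ 0 := fun h => hj0 (Fin.ext (by simpa using h))
    set s : Fin (n - 1) := ⟨(j0 : ℕ) - 1, by omega⟩ with hs_def
    have hterm : ∀ j : Fin n, b j • (bipT m n (Sum.inr j)).2 s
        = if j = j0 then ((b j : ℤ) : ZMod m) else 0 := by
      intro j
      by_cases h : j = j0
      · subst h
        rw [if_pos rfl]
        show b j • (if (s : ℕ) + 1 = (j : ℕ) then (1 : ZMod m) else 0) = _
        rw [if_pos (by simp [hs_def]; omega), zsmul_eq_mul, mul_one]
      · rw [if_neg h]
        show b j • (if (s : ℕ) + 1 = (j : ℕ) then (1 : ZMod m) else 0) = 0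
        rw [if_neg, smul_zero]
        intro hc
        exact h (Fin.ext (by simp [hs_def] at hc; omega))
    have := hE2 s
    rw [Finset.sum_congr rfl (fun j _ => hterm j), Finset.sum_ite_eq'] at this
    simp at this
    exact (ZMod.intCast_zmod_eq_zero_iff_dvd _ _).1 this
  have hsum_b : ∑ j : Fin n, b j = -((m : ℤ) * a 0) := by linarith
  have hdvd : ∀ j : Fin n, (m : ℤ) ∣ b j := by
    intro j
    by_cases hj : j = 0
    · subst hj
      have hb0 : b 0 = (∑ j : Fin n, b j) - ∑ j ∈ Finset.univ.erase (0 : Fin n), b j := by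
        rw [Finset.sum_erase_eq_sub (Finset.mem_univ (0 : Fin n))]
        ring
      rw [hb0, hsum_b]
      exact dvd_sub (Dvd.intro (-(a 0)) (by ring))
        (Finset.dvd_sum fun j hj => hdvd' j (Finset.mem_erase.1 hj).1)
    · exact hdvd' j hj
  -- write x as a combination of the generators
  set c : Fin n → ℤ := fun j => b j / (m : ℤ) with hc_def
  have hm0 : (m : ℤ) ≠ 0 := Int.natCast_ne_zero.2 (NeZero.ne m)
  have hc : ∀ j, (m : ℤ) * c j = b j := fun j => Int.mul_ediv_cancel' (hdvd j)
  have hsum_c : ∑ j : Fin n, c j = -(a 0) := by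
    have hmul : (m : ℤ) * (∑ j : Fin n, c j) = (m : ℤ) * (-(a 0)) := by
      rw [Finset.mul_sum]
      simp_rw [hc]
      rw [hsum_b]; ring
    exact mul_left_cancel₀ hm0 hmul
  have hgen_inl : ∀ (j : Fin n) (i : Fin m), bipGen m n j (Sum.inl i) = -1 := by
    intro j i
    have hs : (∑ i' : Fin m, Finsupp.single (Sum.inl i' : Fin m ⊕ Fin n) (1 : ℤ)) (Sum.inl i)
        = 1 := by
      rw [Finsupp.finset_sum_apply]
      have : ∀ i' : Fin m, Finsupp.single (Sum.inl i' : Fin m ⊕ Fin n) (1 : ℤ) (Sum.inl i)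
          = if i' = i then 1 else 0 := by
        intro i'; rw [Finsupp.single_apply]; simp
      rw [Finset.sum_congr rfl fun i' _ => this i', Finset.sum_ite_eq']
      simp
    simp [bipGen, hs, Finsupp.single_apply]
  have hgen_inr : ∀ (j j0 : Fin n), bipGen m n j (Sum.inr j0)
      = if j = j0 then (m : ℤ) else 0 := by
    intro j j0
    have hs : (∑ i' : Fin m, Finsupp.single (Sum.inl i' : Fin m ⊕ Fin n) (1 : ℤ)) (Sum.inr j0)
        = 0 := by
      rw [Finsupp.finset_sum_apply]
      simp [Finsupp.single_apply]
    simp only [bipGen, Finsupp.sub_apply, Finsupp.smul_apply, Finsupp.single_apply, hs, sub_zero]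
    by_cases h : j = j0 <;> simp [h, Sum.inr.injEq]
  have hxe : x = ∑ j : Fin n, c j • bipGen m n j := by
    ext y
    rw [Finsupp.finset_sum_apply]
    cases y with
    | inl i =>
      have : ∀ j : Fin n, (c j • bipGen m n j) (Sum.inl i) = -(c j) := by
        intro j; rw [Finsupp.smul_apply, hgen_inl, smul_eq_mul]; ring
      rw [Finset.sum_congr rfl fun j _ => this j, Finset.sum_neg_distrib, hsum_c]
      show a i = _
      rw [hak i]; ring
    | inr j0 =>
      have : ∀ j : Fin n, (c j • bipGen m n j) (Sum.inr j0)
          = if j = j0 then (m : ℤ) * c j else 0 := by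
        intro j
        rw [Finsupp.smul_apply, hgen_inr, smul_eq_mul]
        by_cases h : j = j0 <;> simp [h, mul_comm]
      rw [Finset.sum_congr rfl fun j _ => this j, Finset.sum_ite_eq']
      simp only [Finset.mem_univ, if_true, hc]
      rfl
  rw [hxe]
  exact Submodule.sum_mem _ fun j _ =>
    Submodule.smul_mem _ _ (Submodule.subset_span ⟨j, rfl⟩)

lemma bipPhi_ker_le [NeZero m] [NeZero n] :
    LinearMap.ker (bipPhi m n) ≤ Submodule.span ℤ (Set.range (bipGen m n)) :=
  bipPhi_ker_le' m n

end BipAux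
/-- `Υ_ℤ(K_{m,n}, L_std) ≅ ℤ^m ⊕ (ℤ/m)^{n-1}`. -/
theorem upsilon_completeBipartite (m n : ℕ) (hm : 0 < m) (hn : 0 < n) :
    Nonempty ((bipNet m n).Upsilon ≃ₗ[ℤ] ((Fin m → ℤ) × (Fin (n - 1) → ZMod m))) := by
  haveI : NeZero m := ⟨hm.ne'⟩
  haveI : NeZero n := ⟨hn.ne'⟩
  let f : ((bipNet m n).V →₀ ℤ) →ₗ[ℤ] ((Fin m → ℤ) × (Fin (n - 1) → ZMod m)) := bipPhi m n
  have hker : (bipNet m n).lapImage = LinearMap.ker f := by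
    rw [bipNet_lapImage]
    refine le_antisymm (Submodule.span_le.2 ?_) (bipPhi_ker_le m n)
    rintro _ ⟨j, rfl⟩
    exact bipPhi_gen m n j
  exact ⟨(Submodule.quotEquivOfEq _ _ hker).trans
    (f.quotKerEquivOfSurjective (bipPhi_surjective m n))⟩
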